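/- For every q ∈ V, the ideal I_G equals the ideal of R generated by the cut binomials x^{D(Aᶜ,A)} − x^{D(A,Aᶜ)}, taken over all proper subsets A ⊊ V with q ∈ A. -/

import Mathlib

open Finset MvPolynomial

/-- The graph Laplacian acting on functions `V → R`:
`(Δf)(v) = ∑_{w adjacent to v} (f(v) − f(w))`. -/
def lap {V : Type} [Fintype V] (G : SimpleGraph V) [DecidableRel G.Adj]
    {R : Type} [Ring R] (f : V → R) (v : V) : R :=
  ∑ w ∈ G.neighborFinset v, (f v - f w)

/-- `cutDiv G A B v` is the number of vertices of `B` adjacent to `v` if `v ∈ A`,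
and `0` otherwise; this is the divisor `D(A,B)`. -/
def cutDiv {V : Type} [Fintype V] [DecidableEq V] (G : SimpleGraph V)
    [DecidableRel G.Adj] (A B : Finset V) (v : V) : ℕ :=
  if v ∈ A then (B.filter (fun w => G.Adj v w)).card else 0


section aux
set_option linter.unusedSectionVars false
variable {V : Type} [Fintype V] [DecidableEq V] (G : SimpleGraph V) [DecidableRel G.Adj]

/-- indicator -/
def ind (S : Finset V) : V → ℤ := fun v => if v ∈ S then 1 else 0

lemma lap_sub (f g : V → ℤ) (v : V) : lap G (f - g) v = lap G f v - lap G g v := by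
  simp only [lap, Pi.sub_apply, ← Finset.sum_sub_distrib]
  congr 1; ext w; ring

lemma lap_neg (f : V → ℤ) (v : V) : lap G (-f) v = - lap G f v := by
  simp only [lap, Pi.neg_apply, ← Finset.sum_neg_distrib]
  congr 1; ext w; ring

lemma cutDiv_eq_card (S : Finset V) (v : V) (hv : v ∈ S) :
    cutDiv G S Sᶜ v = ((G.neighborFinset v).filter (fun w => w ∉ S)).card := by
  rw [cutDiv, if_pos hv]
  congr 1
  ext w
  simp [SimpleGraph.mem_neighborFinset, and_comm, G.adj_comm v w]

lemma lap_ind (S : Finset V) (v : V) :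
    lap G (ind S) v = (cutDiv G S Sᶜ v : ℤ) - (cutDiv G Sᶜ S v : ℤ) := by
  by_cases hv : v ∈ S
  · rw [cutDiv_eq_card G S v hv]
    have h0 : cutDiv G Sᶜ S v = 0 := by simp [cutDiv, hv]
    rw [h0]
    simp only [lap, ind, if_pos hv, Nat.cast_zero, sub_zero]
    rw [Finset.card_filter]
    push_cast
    congr 1; ext w
    by_cases hw : w ∈ S <;> simp [hw]
  · have h0 : cutDiv G S Sᶜ v = 0 := by simp [cutDiv, hv]
    have h1 : cutDiv G Sᶜ S v = ((G.neighborFinset v).filter (fun w => w ∈ S)).card := by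
      rw [cutDiv, if_pos (Finset.mem_compl.2 hv)]
      congr 1; ext w
      simp [SimpleGraph.mem_neighborFinset, and_comm, G.adj_comm v w]
    rw [h0, h1]
    simp only [lap, ind, if_neg hv, Nat.cast_zero, zero_sub]
    rw [Finset.card_filter]
    push_cast
    rw [Finset.sum_neg_distrib]
end aux

lemma prod_pow_add {V : Type} [Fintype V] [DecidableEq V] {K : Type} [Field K] (D E : V → ℕ) :
    (∏ v, (X v : MvPolynomial V K) ^ (D v + E v)) = (∏ v, X v ^ D v) * ∏ v, X v ^ E v := by
  rw [← Finset.prod_mul_distrib]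
  exact Finset.prod_congr rfl fun v _ => pow_add _ _ _

noncomputable def cutIdeal (V : Type) [Fintype V] [DecidableEq V] (G : SimpleGraph V) [DecidableRel G.Adj]
    (K : Type) [Field K] (q : V) : Ideal (MvPolynomial V K) :=
  Ideal.span {p : MvPolynomial V K | ∃ A : Finset V, A ≠ Finset.univ ∧ q ∈ A ∧
    p = (∏ v, X v ^ cutDiv G Aᶜ A v) - ∏ v, X v ^ cutDiv G A Aᶜ v}

lemma step {V : Type} [Fintype V] [DecidableEq V] (G : SimpleGraph V) [DecidableRel G.Adj]
    (K : Type) [Field K] (q : V) (D₁ D₂ : V → ℕ) (f : V → ℤ)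
    (hf : ∀ v, (D₁ v : ℤ) - D₂ v = lap G f v)
    (hq : ∃ w, f q < f w) :
    ∃ (D₁' : V → ℕ) (f' : V → ℤ),
      (∀ v, (D₁' v : ℤ) - D₂ v = lap G f' v) ∧
      (∑ v, (f' v - f' q).natAbs) < (∑ v, (f v - f q).natAbs) ∧
      ((∏ v, X v ^ D₁ v) - (∏ v, X v ^ D₁' v) : MvPolynomial V K) ∈ cutIdeal V G K q := by
  obtain ⟨w₀, hw₀⟩ := hq
  have hne : (Finset.univ : Finset V).Nonempty := ⟨q, Finset.mem_univ q⟩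
  set M := Finset.univ.sup' hne f with hM
  have hle : ∀ v, f v ≤ M := fun v => Finset.le_sup' f (Finset.mem_univ v)
  obtain ⟨v₀, -, hv₀⟩ := Finset.exists_mem_eq_sup' hne f
  have hqM : f q < M := lt_of_lt_of_le hw₀ (hle w₀)
  set S : Finset V := Finset.univ.filter (fun v => f v = M) with hS
  have hqS : q ∉ S := by
    simp only [hS, Finset.mem_filter, Finset.mem_univ, true_and]
    omega
  have hv₀S : v₀ ∈ S := by
    simp only [hS, Finset.mem_filter, Finset.mem_univ, true_and]
    omega
  have hkey : ∀ v, cutDiv G S Sᶜ v ≤ D₁ v := by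
    intro v
    by_cases hv : v ∈ S
    · have hfv : f v = M := (Finset.mem_filter.1 hv).2
      have h1 : (cutDiv G S Sᶜ v : ℤ) ≤ lap G f v := by
        rw [cutDiv_eq_card G S v hv]
        have e1 : ((((G.neighborFinset v).filter (fun w => w ∉ S)).card : ℤ)) =
            ∑ w ∈ (G.neighborFinset v).filter (fun w => w ∉ S), (1 : ℤ) := by simp
        rw [e1]
        have h2 : ∑ w ∈ (G.neighborFinset v).filter (fun w => w ∉ S), (1 : ℤ) ≤
            ∑ w ∈ (G.neighborFinset v).filter (fun w => w ∉ S), (f v - f w) := by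
          apply Finset.sum_le_sum
          intro w hw
          have hwS : w ∉ S := (Finset.mem_filter.1 hw).2
          have hwM : f w ≠ M := by
            intro h; exact hwS (by simp [hS, h])
          have := hle w
          omega
        have h3 : ∑ w ∈ (G.neighborFinset v).filter (fun w => w ∉ S), (f v - f w) ≤
            ∑ w ∈ G.neighborFinset v, (f v - f w) := by
          apply Finset.sum_le_sum_of_subset_of_nonneg (Finset.filter_subset _ _)
          intro w _ _
          have := hle w
          omega
        exact le_trans h2 h3
      rw [← hf v] at h1
      omega
    · simp [cutDiv, hv]
  refine ⟨fun v => (D₁ v - cutDiv G S Sᶜ v) + cutDiv G Sᶜ S v, f - ind S, ?_, ?_, ?_⟩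
  · intro v
    rw [lap_sub, lap_ind, ← hf v]
    push_cast [Nat.cast_sub (hkey v)]
    ring
  · have hq' : (f - ind S) q = f q := by simp [ind, hqS]
    refine Finset.sum_lt_sum (fun v _ => ?_) ⟨v₀, Finset.mem_univ v₀, ?_⟩
    · rw [hq']
      by_cases hv : v ∈ S
      · have hfv : f v = M := (Finset.mem_filter.1 hv).2
        simp only [Pi.sub_apply, ind, if_pos hv]
        omega
      · simp only [Pi.sub_apply, ind, if_neg hv]
        omega
    · rw [hq']
      have hfv : f v₀ = M := (Finset.mem_filter.1 hv₀S).2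
      simp only [Pi.sub_apply, ind, if_pos hv₀S]
      omega
  · have hgen : ((∏ v, X v ^ cutDiv G S Sᶜ v) - ∏ v, X v ^ cutDiv G Sᶜ S v : MvPolynomial V K)
        ∈ cutIdeal V G K q := by
      apply Ideal.subset_span
      refine ⟨Sᶜ, ?_, Finset.mem_compl.2 hqS, ?_⟩
      · intro h
        have : v₀ ∈ Sᶜ := h ▸ Finset.mem_univ v₀
        exact Finset.mem_compl.1 this hv₀S
      · rw [compl_compl]
    have hD1 : (∏ v, X v ^ D₁ v : MvPolynomial V K) =
        (∏ v, X v ^ (D₁ v - cutDiv G S Sᶜ v)) * ∏ v, X v ^ cutDiv G S Sᶜ v := by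
      rw [← prod_pow_add]
      apply Finset.prod_congr rfl
      intro v _
      congr 1
      have := hkey v
      omega
    have heq : ((∏ v, X v ^ D₁ v) -
        (∏ v, X v ^ (D₁ v - cutDiv G S Sᶜ v + cutDiv G Sᶜ S v)) : MvPolynomial V K) =
        (∏ v, X v ^ (D₁ v - cutDiv G S Sᶜ v)) *
          ((∏ v, X v ^ cutDiv G S Sᶜ v) - ∏ v, X v ^ cutDiv G Sᶜ S v) := by
      rw [hD1, prod_pow_add]
      ring
    rw [heq]
    exact Ideal.mul_mem_left _ _ hgen

lemma main {V : Type} [Fintype V] [DecidableEq V] (G : SimpleGraph V) [DecidableRel G.Adj]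
    (K : Type) [Field K] (q : V) :
    ∀ n : ℕ, ∀ (D₁ D₂ : V → ℕ) (f : V → ℤ),
      (∀ v, (D₁ v : ℤ) - D₂ v = lap G f v) → (∑ v, (f v - f q).natAbs) = n →
      ((∏ v, X v ^ D₁ v) - (∏ v, X v ^ D₂ v) : MvPolynomial V K) ∈ cutIdeal V G K q := by
  intro n
  induction n using Nat.strong_induction_on with
  | _ n ih =>
  intro D₁ D₂ f hf hn
  by_cases h1 : ∃ w, f q < f w
  · obtain ⟨D₁', f', hf', hlt, hmem⟩ := step G K q D₁ D₂ f hf h1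
    have h2 := ih _ (hn ▸ hlt) D₁' D₂ f' hf' rfl
    have he : ((∏ v, X v ^ D₁ v) - (∏ v, X v ^ D₂ v) : MvPolynomial V K) =
        ((∏ v, X v ^ D₁ v) - ∏ v, X v ^ D₁' v) + ((∏ v, X v ^ D₁' v) - ∏ v, X v ^ D₂ v) := by
      ring
    rw [he]
    exact Ideal.add_mem _ hmem h2
  · by_cases h2 : ∃ w, f w < f q
    · obtain ⟨w, hw⟩ := h2
      have hf2 : ∀ v, (D₂ v : ℤ) - D₁ v = lap G (-f) v := fun v => by
        rw [lap_neg]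
        have := hf v
        omega
      obtain ⟨D₂', f', hf', hlt, hmem⟩ := step G K q D₂ D₁ (-f) hf2
        ⟨w, by simp only [Pi.neg_apply]; omega⟩
      have hμ : (∑ v, ((-f) v - (-f) q).natAbs) = n := by
        rw [← hn]
        apply Finset.sum_congr rfl
        intro v _
        simp only [Pi.neg_apply]
        omega
      have h3 := ih _ (hμ ▸ hlt) D₂' D₁ f' hf' rfl
      have he : ((∏ v, X v ^ D₁ v) - (∏ v, X v ^ D₂ v) : MvPolynomial V K) =
          -(((∏ v, X v ^ D₂ v) - ∏ v, X v ^ D₂' v) + ((∏ v, X v ^ D₂' v) - ∏ v, X v ^ D₁ v)) := by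
        ring
      rw [he]
      exact neg_mem (Ideal.add_mem _ hmem h3)
    · push_neg at h1 h2
      have hc : ∀ v, f v = f q := fun v => le_antisymm (h1 v) (h2 v)
      have h0 : ∀ v, lap G f v = 0 := by
        intro v
        unfold lap
        apply Finset.sum_eq_zero
        intro w _
        rw [hc v, hc w, sub_self]
      have hD : D₁ = D₂ := funext fun v => by
        have := hf v
        rw [h0 v] at this
        omega
      rw [hD, sub_self]
      exact Ideal.zero_mem _

theorem stmt6 (V : Type) [Fintype V] [Nonempty V] [DecidableEq V]
    (G : SimpleGraph V) [DecidableRel G.Adj] (hG : G.Connected)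
    (K : Type) [Field K] (q : V) :
    Ideal.span {p : MvPolynomial V K | ∃ D₁ D₂ : V → ℕ,
        (∃ f : V → ℤ, ∀ v, (D₁ v : ℤ) - (D₂ v : ℤ) = lap G f v) ∧
        p = (∏ v, X v ^ D₁ v) - ∏ v, X v ^ D₂ v} =
    Ideal.span {p : MvPolynomial V K | ∃ A : Finset V, A ≠ Finset.univ ∧ q ∈ A ∧
        p = (∏ v, X v ^ cutDiv G Aᶜ A v) - ∏ v, X v ^ cutDiv G A Aᶜ v} := by
  apply le_antisymm
  · rw [Ideal.span_le]
    rintro p ⟨D₁, D₂, ⟨f, hf⟩, rfl⟩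
    exact main G K q _ D₁ D₂ f hf rfl
  · rw [Ideal.span_le]
    rintro p ⟨A, hA, hqA, rfl⟩
    apply Ideal.subset_span
    exact ⟨cutDiv G Aᶜ A, cutDiv G A Aᶜ, ⟨ind Aᶜ, fun v => by rw [lap_ind, compl_compl]⟩, rfl⟩
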